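/- Let M be a simple conical refinement commutative additive monoid. If there exists a positive integer n such that sr(a) ≤ n for every a ∈ M, then M is cancellative: a + x = a + y implies x = y for all a, x, y ∈ M. -/

import Mathlib

/-- `a` satisfies the `n`-stable rank condition in `M`. -/
def SRCond {M : Type*} [AddCommMonoid M] (a : M) (n : ℕ) : Prop :=
  ∀ x y : M, n • a + x = a + y → ∃ e : M, n • a = a + e ∧ e + x = y

/-- The stable rank of `a`: the least positive integer `n` such that `a` satisfies
the `n`-stable rank condition, or `∞` if no such `n` exists. -/
noncomputable def sr {M : Type*} [AddCommMonoid M] (a : M) : ℕ∞ :=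
  sInf {n : ℕ∞ | ∃ m : ℕ, 0 < m ∧ SRCond a m ∧ n = (m : ℕ∞)}

section StableRankAux

variable {M : Type*} [AddCommMonoid M]

private lemma acT (A a z u : M) : A + (a + z) + u = a + u + (z + A) := by abel

private lemma acA (A B c x : M) : c + (A + (B + x)) = (A + (B + c)) + x := by abel

private lemma acB (A B c y : M) : (A + (B + c)) + y = c + ((A + B) + y) := by abel

private lemma acC (A B a c : M) : ((A + B) + a) + c = (A + a) + (B + c) := by abel

/-- The stable rank condition is upward closed in `n`. -/
lemma srcond_mono {a : M} {m n : ℕ} (h : SRCond a m) (hmn : m ≤ n) : SRCond a n := by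
  intro x y hxy
  obtain ⟨e, he1, he2⟩ := h ((n - m) • a + x) y (by
    rw [← add_assoc, ← add_nsmul, Nat.add_sub_cancel' hmn]; exact hxy)
  refine ⟨e + (n - m) • a, ?_, ?_⟩
  · calc n • a = (m + (n - m)) • a := by rw [Nat.add_sub_cancel' hmn]
      _ = m • a + (n - m) • a := add_nsmul a m (n - m)
      _ = (a + e) + (n - m) • a := by rw [he1]
      _ = a + (e + (n - m) • a) := add_assoc _ _ _
  · rw [add_assoc]; exact he2

/-- Exact cancellation: `s` cancels whenever its companion contains `n • s`. -/
lemma lemE {n : ℕ} (hSR : ∀ a : M, SRCond a n) (s U V : M)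
    (h : s + (n • s + U) = s + V) : V = n • s + U := by
  obtain ⟨e, he1, he2⟩ := hSR s (s + U) V (by rw [add_left_comm]; exact h)
  calc V = e + (s + U) := he2.symm
    _ = (e + s) + U := (add_assoc _ _ _).symm
    _ = (s + e) + U := by rw [add_comm e s]
    _ = n • s + U := by rw [← he1]

/-- No infinite elements: `a + b = a → b = 0`. -/
lemma no_infinite (hconical : ∀ x y : M, x + y = 0 → x = 0 ∧ y = 0)
    (hsimple : ∀ a : M, a ≠ 0 → ∀ x : M, ∃ n : ℕ, 0 < n ∧ ∃ z : M, x + z = n • a)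
    {n : ℕ} (hSR : ∀ a : M, SRCond a n) :
    ∀ a b : M, a + b = a → b = 0 := by
  intro a b hab
  by_contra hb
  obtain ⟨m, hm, c, hc⟩ := hsimple b hb a
  have hmb : ∀ k : ℕ, a + k • b = a := by
    intro k
    induction k with
    | zero => simp
    | succ k ih => rw [succ_nsmul, ← add_assoc, ih, hab]
  have h2 : a = (a + a) + c := by
    have h := (hmb m).symm
    rw [← hc, ← add_assoc] at h
    exact h
  have hk : ∀ k : ℕ, a = (k + 1) • a + k • c := by
    intro k
    induction k with
    | zero => simp
    | succ k ih =>
      calc a = (a + a) + c := h2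
        _ = (((k + 1) • a + k • c) + a) + c := by rw [← ih]
        _ = (k + 1 + 1) • a + (k + 1) • c := by
            rw [succ_nsmul a (k + 1), succ_nsmul c k]; exact acC _ _ _ _
  obtain ⟨e, _, he2⟩ := hSR a (a + n • c) 0 (by
    rw [add_zero, ← add_assoc, ← succ_nsmul, ← hk n])
  have h0 := hconical _ _ he2
  have ha0 := (hconical _ _ h0.2).1
  rw [ha0, zero_add] at hab
  exact hb hab

/-- Absorption: a discrepancy cancelled by some `a` is absorbed by `n` copies of any
nonzero element. -/
lemma absorb (hsimple : ∀ a : M, a ≠ 0 → ∀ x : M, ∃ n : ℕ, 0 < n ∧ ∃ z : M, x + z = n • a)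
    {n : ℕ} (hSR : ∀ a : M, SRCond a n) {a x y : M} (hxy : a + x = a + y) :
    ∀ c : M, c ≠ 0 → n • c + x = n • c + y := by
  intro c hc
  obtain ⟨K, hK, z, hz⟩ := hsimple c hc a
  have htop : ∀ u : M, (n + K) • c + u = a + u + (z + n • c) := by
    intro u
    rw [add_nsmul, ← hz]
    exact acT _ _ _ _
  have h1 : (n + K) • c + x = (n + K) • c + y := by rw [htop x, htop y, hxy]
  have hstep : ∀ m : ℕ, (n + (m + 1)) • c + x = (n + (m + 1)) • c + y →
      (n + m) • c + x = (n + m) • c + y := by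
    intro m h
    have hexp : (n + (m + 1)) • c = n • c + (m • c + c) := by
      rw [add_nsmul, succ_nsmul]
    have heq := lemE hSR c (m • c + x) ((n + m) • c + y) (by
      calc c + (n • c + (m • c + x)) = (n + (m + 1)) • c + x := by
            rw [hexp]; exact acA _ _ _ _
        _ = (n + (m + 1)) • c + y := h
        _ = c + ((n + m) • c + y) := by rw [hexp, add_nsmul]; exact acB _ _ _ _)
    rw [heq, add_nsmul, add_assoc]
  have hdown : ∀ m : ℕ, (n + m) • c + x = (n + m) • c + y →
      n • c + x = n • c + y := by
    intro m
    induction m with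
    | zero => intro h; simpa using h
    | succ m ih => intro h; exact ih (hstep m h)
  exact hdown K h1

/-- In the presence of an atom, every element is a multiple of it. -/
lemma atom_mult (hconical : ∀ x y : M, x + y = 0 → x = 0 ∧ y = 0)
    (href : ∀ x1 x2 y1 y2 : M, x1 + x2 = y1 + y2 →
      ∃ z11 z12 z21 z22 : M,
        x1 = z11 + z12 ∧ x2 = z21 + z22 ∧ y1 = z11 + z21 ∧ y2 = z12 + z22)
    {g : M} (hatom : ∀ u v : M, g = u + v → u = 0 ∨ v = 0) :
    ∀ (K : ℕ) (z w : M), z + w = K • g → ∃ i : ℕ, z = i • g := by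
  intro K
  induction K with
  | zero =>
    intro z w h
    rw [zero_nsmul] at h
    exact ⟨0, by rw [zero_nsmul]; exact (hconical z w h).1⟩
  | succ K ih =>
    intro z w h
    rw [succ_nsmul] at h
    obtain ⟨α, β, γ, δ, h1, h2, h3, h4⟩ := href z w (K • g) g h
    rcases hatom β δ h4 with hβ | hδ
    · obtain ⟨i, hi⟩ := ih α γ h3.symm
      exact ⟨i, by rw [h1, hβ, add_zero, hi]⟩
    · obtain ⟨i, hi⟩ := ih α γ h3.symm
      refine ⟨i + 1, ?_⟩
      have hgβ : g = β := by rw [h4, hδ, add_zero]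
      rw [h1, hi, ← hgβ, succ_nsmul]

/-- Common nonzero lower bound extraction. -/
lemma clb (hconical : ∀ x y : M, x + y = 0 → x = 0 ∧ y = 0)
    (href : ∀ x1 x2 y1 y2 : M, x1 + x2 = y1 + y2 →
      ∃ z11 z12 z21 z22 : M,
        x1 = z11 + z12 ∧ x2 = z21 + z22 ∧ y1 = z11 + z21 ∧ y2 = z12 + z22) :
    ∀ (K : ℕ) (c₁ z c₂ : M), c₁ + z = K • c₂ →
      c₁ = 0 ∨ ∃ s : M, s ≠ 0 ∧ (∃ u, s + u = c₁) ∧ (∃ v, s + v = c₂) := by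
  intro K
  induction K with
  | zero =>
    intro c₁ z c₂ h
    rw [zero_nsmul] at h
    exact Or.inl (hconical _ _ h).1
  | succ K ih =>
    intro c₁ z c₂ h
    rw [succ_nsmul] at h
    obtain ⟨α, β, γ, δ, h1, h2, h3, h4⟩ := href c₁ z (K • c₂) c₂ h
    by_cases hβ : β = 0
    · have hc1 : c₁ = α := by rw [h1, hβ, add_zero]
      rcases ih α γ c₂ h3.symm with h0 | ⟨s, hs, ⟨u, hu⟩, hv⟩
      · exact Or.inl (by rw [hc1, h0])
      · exact Or.inr ⟨s, hs, ⟨u, by rw [hu, ← hc1]⟩, hv⟩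
    · exact Or.inr ⟨β, hβ, ⟨α, by rw [add_comm]; exact h1.symm⟩, ⟨δ, h4.symm⟩⟩

end StableRankAux

theorem stmt_18 {M : Type*} [AddCommMonoid M]
    (hconical : ∀ x y : M, x + y = 0 → x = 0 ∧ y = 0)
    (href : ∀ x1 x2 y1 y2 : M, x1 + x2 = y1 + y2 →
      ∃ z11 z12 z21 z22 : M,
        x1 = z11 + z12 ∧ x2 = z21 + z22 ∧ y1 = z11 + z21 ∧ y2 = z12 + z22)
    (hnz : ∃ x : M, x ≠ 0)
    (hsimple : ∀ a : M, a ≠ 0 → ∀ x : M, ∃ n : ℕ, 0 < n ∧ ∃ z : M, x + z = n • a)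
    (hbdd : ∃ n : ℕ, 0 < n ∧ ∀ a : M, sr a ≤ (n : ℕ∞)) :
    ∀ a x y : M, a + x = a + y → x = y := by
  obtain ⟨n, hn, hb⟩ := hbdd
  -- Uniform stable rank bound: every element satisfies the `n`-stable rank condition.
  have hSR : ∀ a : M, SRCond a n := by
    intro a
    obtain ⟨m, hm, hS, hle⟩ : ∃ m : ℕ, 0 < m ∧ SRCond a m ∧ m ≤ n := by
      by_contra hcon
      push_neg at hcon
      have h1 : (n : ℕ∞) + 1 ≤ sr a := by
        apply le_sInf
        rintro t ⟨m, hm, hSm, rfl⟩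
        exact_mod_cast Nat.succ_le_of_lt (hcon m hm hSm)
      have h3 : (n : ℕ∞) + 1 ≤ (n : ℕ∞) := h1.trans (hb a)
      have h4 : n + 1 ≤ n := by exact_mod_cast h3
      omega
    exact srcond_mono hS hle
  have hdag : ∀ a b : M, a + b = a → b = 0 := no_infinite hconical hsimple hSR
  intro a x y hxy
  by_cases hx : x = 0
  · subst hx
    have h : a + y = a := by rw [← hxy, add_zero]
    exact (hdag a y h).symm
  by_cases hatom : ∃ g : M, g ≠ 0 ∧ ∀ u v : M, g = u + v → u = 0 ∨ v = 0
  · -- Atomic case: M is the multiples of the atom g.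
    obtain ⟨g, hg, hgatom⟩ := hatom
    have hmul : ∀ z : M, ∃ i : ℕ, z = i • g := by
      intro z
      obtain ⟨K, hK, w, hw⟩ := hsimple g hg z
      exact atom_mult hconical href hgatom K z w hw
    obtain ⟨l, hl⟩ := hmul a
    obtain ⟨i, hi⟩ := hmul x
    obtain ⟨j, hj⟩ := hmul y
    have key : ∀ p d : ℕ, p • g = (p + d) • g → d = 0 := by
      intro p d hpd
      have h : p • g + d • g = p • g := by rw [← add_nsmul]; exact hpd.symm
      have hd0 := hdag _ _ h
      cases d with
      | zero => rfl
      | succ d =>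
        rw [succ_nsmul] at hd0
        exact absurd (hconical _ _ hd0).2 hg
    have hinj : ∀ p q : ℕ, p • g = q • g → p = q := by
      intro p q hpq
      rcases le_total p q with h | h
      · obtain ⟨d, rfl⟩ := Nat.exists_eq_add_of_le h
        have := key p d hpq; omega
      · obtain ⟨d, rfl⟩ := Nat.exists_eq_add_of_le h
        have := key q d hpq.symm; omega
    have hli : (l + i) • g = (l + j) • g := by
      rw [add_nsmul, add_nsmul, ← hl, ← hi, ← hj]; exact hxy
    have := hinj _ _ hli
    rw [hi, hj]
    congr 1
    omega
  · -- Atomless case.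
    push_neg at hatom
    have hatomless : ∀ c : M, c ≠ 0 → ∃ u v : M, c = u + v ∧ u ≠ 0 ∧ v ≠ 0 := by
      intro c hc
      obtain ⟨u, v, huv, h2⟩ := hatom c hc
      exact ⟨u, v, huv, h2.1, h2.2⟩
    -- arbitrarily 2-power-divisible nonzero lower bounds
    have hdiv : ∀ (j : ℕ) (z : M), z ≠ 0 → ∃ s w : M, s ≠ 0 ∧ (2 ^ j) • s + w = z := by
      intro j
      induction j with
      | zero =>
        intro z hz
        exact ⟨z, 0, hz, by rw [pow_zero, one_nsmul, add_zero]⟩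
      | succ j ih =>
        intro z hz
        obtain ⟨s, w, hs, hsw⟩ := ih z hz
        obtain ⟨u, v, hsuv, hu, hv⟩ := hatomless s hs
        obtain ⟨K, hK, z', hz'⟩ := hsimple v hv u
        rcases clb hconical href K u z' v hz' with h0 | ⟨t, ht, ⟨u', hu'⟩, ⟨v', hv'⟩⟩
        · exact absurd h0 hu
        · refine ⟨t, (2 ^ j) • (u' + v') + w, ht, ?_⟩
          have hs2 : s = 2 • t + (u' + v') := by
            rw [hsuv, ← hu', ← hv', two_nsmul]; abel
          calc (2 ^ (j + 1)) • t + ((2 ^ j) • (u' + v') + w)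
              = (2 ^ j) • (2 • t) + ((2 ^ j) • (u' + v') + w) := by
                rw [smul_smul, ← pow_succ]
            _ = (2 ^ j) • (2 • t + (u' + v')) + w := by
                rw [smul_add (2 ^ j) (2 • t) (u' + v'), add_assoc]
            _ = (2 ^ j) • s + w := by rw [← hs2]
            _ = z := hsw
    obtain ⟨s, w, hs, hsw⟩ := hdiv n x hx
    have hpow : n ≤ 2 ^ n := Nat.le_of_lt (Nat.lt_two_pow_self (n := n))
    obtain ⟨d, hd⟩ : ∃ d, 2 ^ n = n + d := ⟨2 ^ n - n, by omega⟩
    have hx0 : x = n • s + (d • s + w) := by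
      rw [← hsw, hd, add_nsmul, add_assoc]
    have habs : n • s + x = n • s + y := absorb hsimple hSR hxy s hs
    have hdesc : ∀ k : ℕ, k • s + x = k • s + y → x = y := by
      intro k
      induction k with
      | zero => intro h; simpa using h
      | succ k ih =>
        intro h
        have hky : ∀ u : M, (k + 1) • s + u = s + (k • s + u) := by
          intro u
          rw [succ_nsmul, add_comm (k • s) s, add_assoc]
        have heq := lemE hSR s (k • s + (d • s + w)) (k • s + y) (by
          calc s + (n • s + (k • s + (d • s + w)))
              = s + (k • s + (n • s + (d • s + w))) := by
                rw [add_left_comm (n • s) (k • s) (d • s + w)]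
            _ = s + (k • s + x) := by rw [← hx0]
            _ = (k + 1) • s + x := (hky x).symm
            _ = (k + 1) • s + y := h
            _ = s + (k • s + y) := hky y)
        apply ih
        rw [hx0, heq]
        exact add_left_comm _ _ _
    exact hdesc n habs
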